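/- Let d ≥ 3 and suppose that for every Borel probability measure μ on ℝ^d there exists a line ℓ ⊂ ℝ^d with depth_μ(ℓ) ≥ 1/d + 1/(3d³). Then for every d, every k with 1 ≤ k ≤ d − 2, and every Borel probability measure μ on ℝ^d, there exists a k-flat α ⊂ ℝ^d with depth_μ(α) ≥ 1/(d−k+1) + 1/(3(d−k+1)³). -/

import Mathlib

open MeasureTheory

/-- The half-space depth of a set (e.g. a flat) `α`: the infimum of the measures of
closed half-spaces containing `α`. -/
noncomputable def depthFlat (m : ℕ) (μ : Measure (EuclideanSpace ℝ (Fin m)))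
    (α : Set (EuclideanSpace ℝ (Fin m))) : ℝ :=
  sInf {r : ℝ | ∃ (v : EuclideanSpace ℝ (Fin m)) (c : ℝ), v ≠ 0 ∧
    (∀ x ∈ α, (inner ℝ v x : ℝ) ≤ c) ∧
    r = (μ {y : EuclideanSpace ℝ (Fin m) | (inner ℝ v y : ℝ) ≤ c}).toReal}

noncomputable def projL (d m : ℕ) (hm : m ≤ d) :
    EuclideanSpace ℝ (Fin d) →ₗ[ℝ] EuclideanSpace ℝ (Fin m) where
  toFun y := WithLp.toLp 2 (fun j => y (Fin.castLE hm j))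
  map_add' x y := by ext j; simp
  map_smul' c x := by ext j; simp

noncomputable def embL (d m : ℕ) (hm : m ≤ d) :
    EuclideanSpace ℝ (Fin m) →ₗ[ℝ] EuclideanSpace ℝ (Fin d) where
  toFun z := WithLp.toLp 2 (fun i : Fin d => if h : (i : ℕ) < m then z ⟨i, h⟩ else 0)
  map_add' x y := by ext i; by_cases h : (i : ℕ) < m <;>
    simp [h, PiLp.add_apply]
  map_smul' c x := by ext i; by_cases h : (i : ℕ) < m <;>
    simp [h, PiLp.smul_apply]

lemma projL_embL (d m : ℕ) (hm : m ≤ d) (z : EuclideanSpace ℝ (Fin m)) :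
    projL d m hm (embL d m hm z) = z := by
  ext j
  simp [projL, embL, j.isLt]

lemma key_inner (d m : ℕ) (hm : m ≤ d) (v : EuclideanSpace ℝ (Fin d))
    (hv : ∀ i : Fin d, ¬ ((i : ℕ) < m) → v i = 0) (y : EuclideanSpace ℝ (Fin d)) :
    (inner ℝ v y : ℝ) = inner ℝ (projL d m hm v) (projL d m hm y) := by
  simp only [PiLp.inner_apply, RCLike.inner_apply, conj_trivial, projL, LinearMap.coe_mk,
    AddHom.coe_mk, WithLp.ofLp_toLp]
  rw [show (∑ x : Fin m, y (Fin.castLE hm x) * v (Fin.castLE hm x))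
      = ∑ i ∈ Finset.univ.map (Fin.castLEEmb hm), y i * v i by
    rw [Finset.sum_map]; rfl]
  symm
  apply Finset.sum_subset (Finset.subset_univ _)
  intro i _ hi
  have : ¬ ((i : ℕ) < m) := by
    intro h
    exact hi (Finset.mem_map.2 ⟨⟨i, h⟩, Finset.mem_univ _, Fin.ext rfl⟩)
  rw [hv i this, mul_zero]

lemma forall_linear_le {a b c : ℝ} (h : ∀ t : ℝ, a + t * b ≤ c) : b = 0 := by
  by_contra hb
  have h1 := h ((c - a + 1) / b)
  rw [div_mul_cancel₀ _ hb] at h1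
  linarith


theorem stmt13
    (H : ∀ m : ℕ, 3 ≤ m → ∀ μ : Measure (EuclideanSpace ℝ (Fin m)), IsProbabilityMeasure μ →
      ∃ ℓ : AffineSubspace ℝ (EuclideanSpace ℝ (Fin m)),
        (ℓ : Set (EuclideanSpace ℝ (Fin m))).Nonempty ∧
        Module.finrank ℝ ℓ.direction = 1 ∧
        depthFlat m μ ℓ ≥ 1 / m + 1 / (3 * (m : ℝ) ^ 3)) :
    ∀ d k : ℕ, 1 ≤ k → k + 2 ≤ d →
      ∀ μ : Measure (EuclideanSpace ℝ (Fin d)), IsProbabilityMeasure μ →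
        ∃ α : AffineSubspace ℝ (EuclideanSpace ℝ (Fin d)),
          (α : Set (EuclideanSpace ℝ (Fin d))).Nonempty ∧
          Module.finrank ℝ α.direction = k ∧
          depthFlat d μ α ≥ 1 / (d - k + 1 : ℕ) + 1 / (3 * ((d - k + 1 : ℕ) : ℝ) ^ 3) := by
  intro d k hk hkd μ hμ
  set m : ℕ := d - k + 1 with hmdef
  have hm3 : 3 ≤ m := by omega
  have hmd : m ≤ d := by omega
  set L : EuclideanSpace ℝ (Fin d) →ₗ[ℝ] EuclideanSpace ℝ (Fin m) := projL d m hmd with hL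
  have hLcont : Continuous L := L.continuous_of_finiteDimensional
  have hLmeas : Measurable L := hLcont.measurable
  have hLsurj : Function.Surjective L := fun z => ⟨embL d m hmd z, projL_embL d m hmd z⟩
  set ν : Measure (EuclideanSpace ℝ (Fin m)) := μ.map L with hν
  have hνprob : IsProbabilityMeasure ν := Measure.isProbabilityMeasure_map hLmeas.aemeasurable
  obtain ⟨ℓ, ⟨p0, hp0⟩, hℓrank, hℓdepth⟩ := H m hm3 ν hνprob
  -- the preimage flat
  set x0 : EuclideanSpace ℝ (Fin d) := embL d m hmd p0 with hx0def
  have hLx0 : L x0 = p0 := projL_embL d m hmd p0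
  set V : Submodule ℝ (EuclideanSpace ℝ (Fin d)) := ℓ.direction.comap L with hVdef
  set α : AffineSubspace ℝ (EuclideanSpace ℝ (Fin d)) := AffineSubspace.mk' x0 V with hαdef
  have hαset : (α : Set (EuclideanSpace ℝ (Fin d))) = L ⁻¹' (ℓ : Set _) := by
    ext x
    constructor
    · intro hx
      have hv : L (x -ᵥ x0) ∈ ℓ.direction := AffineSubspace.mem_mk'.1 hx
      have := AffineSubspace.vadd_mem_of_mem_direction hv (hLx0 ▸ hp0)
      simpa [map_sub] using this
    · intro hx
      refine AffineSubspace.mem_mk'.2 ?_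
      have : L x -ᵥ L x0 ∈ ℓ.direction :=
        AffineSubspace.vsub_mem_direction hx (hLx0 ▸ hp0)
      simpa [map_sub, hVdef] using this
  have hx0α : x0 ∈ α := by
    rw [← SetLike.mem_coe, hαset]
    simp only [Set.mem_preimage, hLx0]
    exact hp0
  refine ⟨α, ⟨x0, hx0α⟩, ?_, ?_⟩
  · -- finrank computation
    have hαdir : α.direction = V := AffineSubspace.direction_mk' x0 V
    have hkerV : LinearMap.ker L ≤ V := by
      intro x hx
      simp only [LinearMap.mem_ker] at hx
      show L x ∈ ℓ.direction
      rw [hx]; exact Submodule.zero_mem _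
    have hrangeL : LinearMap.range L = ⊤ := LinearMap.range_eq_top.2 hLsurj
    have hkerrank : Module.finrank ℝ (LinearMap.ker L) = d - m := by
      have := LinearMap.finrank_range_add_finrank_ker L
      rw [hrangeL] at this
      simp only [finrank_top, finrank_euclideanSpace_fin] at this
      omega
    have hres : ∀ x ∈ V, L x ∈ ℓ.direction := fun x hx => hx
    set g : V →ₗ[ℝ] ℓ.direction := L.restrict hres with hg
    have hgrange : LinearMap.range g = ⊤ := by
      rw [LinearMap.range_eq_top]
      rintro ⟨u, hu⟩
      refine ⟨⟨embL d m hmd u, ?_⟩, ?_⟩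
      · show L (embL d m hmd u) ∈ ℓ.direction
        rw [hL, projL_embL]; exact hu
      · apply Subtype.ext
        show L (embL d m hmd u) = u
        rw [hL, projL_embL]
    have hgker : Module.finrank ℝ (LinearMap.ker g) = d - m := by
      rw [hg, LinearMap.ker_restrict hres]
      rw [← hkerrank]
      exact (Submodule.comapSubtypeEquivOfLe hkerV).finrank_eq
    have := LinearMap.finrank_range_add_finrank_ker g
    rw [hgrange, hgker] at this
    simp only [finrank_top, hℓrank] at this
    rw [hαdir, ← this]
    omega
  · -- depth
    have hsets : {r : ℝ | ∃ (v : EuclideanSpace ℝ (Fin d)) (c : ℝ), v ≠ 0 ∧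
          (∀ x ∈ (α : Set (EuclideanSpace ℝ (Fin d))), (inner ℝ v x : ℝ) ≤ c) ∧
          r = (μ {y : EuclideanSpace ℝ (Fin d) | (inner ℝ v y : ℝ) ≤ c}).toReal}
        = {r : ℝ | ∃ (w : EuclideanSpace ℝ (Fin m)) (c : ℝ), w ≠ 0 ∧
          (∀ z ∈ (ℓ : Set (EuclideanSpace ℝ (Fin m))), (inner ℝ w z : ℝ) ≤ c) ∧
          r = (ν {y : EuclideanSpace ℝ (Fin m) | (inner ℝ w y : ℝ) ≤ c}).toReal} := by
      have hmap : ∀ (w : EuclideanSpace ℝ (Fin m)) (c : ℝ),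
          ν {y | (inner ℝ w y : ℝ) ≤ c} = μ {y | (inner ℝ w (L y) : ℝ) ≤ c} := by
        intro w c
        rw [hν, Measure.map_apply hLmeas]
        · rfl
        · exact measurableSet_le ((continuous_const.inner continuous_id).measurable)
            measurable_const
      ext r
      simp only [Set.mem_setOf_eq]
      constructor
      · rintro ⟨v, c, hv0, hvc, rfl⟩
        have hhigh : ∀ i : Fin d, ¬ ((i : ℕ) < m) → v i = 0 := by
          intro i hi
          have hker : L (EuclideanSpace.single i (1 : ℝ)) = 0 := by
            ext j
            show (EuclideanSpace.single i (1 : ℝ)) (Fin.castLE hmd j) = 0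
            have hne : ¬ (Fin.castLE hmd j = i) := fun hc => hi (by
              rw [← hc, Fin.coe_castLE]; exact j.isLt)
            rw [EuclideanSpace.single_apply, if_neg hne]
          have hmem : ∀ t : ℝ, x0 + t • EuclideanSpace.single i (1 : ℝ) ∈ α := by
            intro t
            rw [← SetLike.mem_coe, hαset, Set.mem_preimage]
            rw [map_add, _root_.map_smul, hker, smul_zero, add_zero, hLx0]
            exact hp0
          have hlin : ∀ t : ℝ, (inner ℝ v x0 : ℝ) + t * v i ≤ c := by
            intro t
            have := hvc _ (hmem t)
            rwa [inner_add_right, inner_smul_right,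
              EuclideanSpace.inner_single_right, conj_trivial, one_mul] at this
          exact forall_linear_le hlin
        have hid : ∀ y, (inner ℝ v y : ℝ) = inner ℝ (L v) (L y) :=
          key_inner d m hmd v hhigh
        refine ⟨L v, c, ?_, ?_, ?_⟩
        · intro hw
          apply hv0
          ext i
          by_cases hi : (i : ℕ) < m
          · have := congrFun (congrArg (fun (z : EuclideanSpace ℝ (Fin m)) => (z : Fin m → ℝ)) hw) ⟨i, hi⟩
            simpa [hL, projL] using this
          · exact hhigh i hi
        · intro z hz
          obtain ⟨x, rfl⟩ := hLsurj z
          have hxα : x ∈ α := by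
            rw [← SetLike.mem_coe, hαset]; exact hz
          rw [← hid]
          exact hvc x hxα
        · rw [hmap]
          congr 1
          apply congrArg
          ext y
          simp only [Set.mem_setOf_eq, hid]
      · rintro ⟨w, c, hw0, hwc, rfl⟩
        set v : EuclideanSpace ℝ (Fin d) := embL d m hmd w with hvdef
        have hLv : L v = w := projL_embL d m hmd w
        have hhigh : ∀ i : Fin d, ¬ ((i : ℕ) < m) → v i = 0 := by
          intro i hi
          show (if h : (i : ℕ) < m then w ⟨i, h⟩ else 0) = 0
          rw [dif_neg hi]
        have hid : ∀ y, (inner ℝ v y : ℝ) = inner ℝ w (L y) := by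
          intro y
          rw [key_inner d m hmd v hhigh y, hLv]
        refine ⟨v, c, ?_, ?_, ?_⟩
        · intro hv
          apply hw0
          rw [← hLv, hv, map_zero]
        · intro x hx
          rw [hid]
          apply hwc
          rw [hαset] at hx
          exact hx
        · rw [hmap]
          congr 1
          apply congrArg
          ext y
          simp only [Set.mem_setOf_eq, hid]
    have : depthFlat d μ (α : Set (EuclideanSpace ℝ (Fin d)))
        = depthFlat m ν (ℓ : Set (EuclideanSpace ℝ (Fin m))) := by
      unfold depthFlat
      rw [hsets]
    rw [this]
    exact_mod_cast hℓdepth
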